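/- For α > 0, λ ≥ 0, y ≥ 0 and μ > 0, ∫₀^∞ (1/μ) e^{−λx} g_α(x/μ, y) dx = (1 + μλ)^{−α} exp(−μλ y/(1+μλ)), where g_α(x,y) = e^{−x−y} Σ_{k≥0} x^{k+α−1} y^k / (Γ(k+α) k!). -/

import Mathlib

open MeasureTheory

/-- The noncentral gamma-type kernel
`g_α(x,y) = e^{-x-y} ∑_{k≥0} x^{k+α-1} y^k / (Γ(k+α) k!)`. -/
noncomputable def royenG (α x y : ℝ) : ℝ :=
  Real.exp (-x - y) *
    ∑' k : ℕ, x ^ ((k : ℝ) + α - 1) * y ^ k / (Real.Gamma ((k : ℝ) + α) * (Nat.factorial k))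

open Real Set in
lemma royen_integrable_aux {s b : ℝ} (hs : 0 < s) (hb : 0 < b) :
    IntegrableOn (fun x : ℝ => x ^ (s - 1) * Real.exp (-(b * x))) (Ioi 0) := by
  have := integrableOn_rpow_mul_exp_neg_mul_rpow (p := 1) (s := s - 1) (b := b)
    (by linarith) one_pos hb
  simpa [rpow_one, neg_mul] using this

open Real Set in
lemma royen_term_integral (α l y μ : ℝ) (hα : 0 < α) (hl : 0 ≤ l) (hy : 0 ≤ y) (hμ : 0 < μ)
    (k : ℕ) :
    ∫ x in Ioi (0 : ℝ), (1 / μ) * Real.exp (-l * x) *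
        (Real.exp (-(x / μ) - y) *
          ((x / μ) ^ ((k : ℝ) + α - 1) * y ^ k / (Real.Gamma ((k : ℝ) + α) * (Nat.factorial k))))
      = (Real.exp (-y) * (1 + μ * l) ^ (-α)) * ((y / (1 + μ * l)) ^ k / (Nat.factorial k)) := by
  set s : ℝ := (k : ℝ) + α with hs_def
  have hs : 0 < s := by positivity
  set c : ℝ := l + 1 / μ with hc_def
  have hc : 0 < c := by positivity
  have hμc : μ * c = 1 + μ * l := by rw [hc_def, mul_add, mul_one_div_cancel hμ.ne']; ring
  have hcpos : (0 : ℝ) < 1 + μ * l := by rw [← hμc]; positivity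
  have hΓ : 0 < Real.Gamma s := Real.Gamma_pos_of_pos hs
  have h1 : ∫ x in Ioi (0 : ℝ), (1 / μ) * Real.exp (-l * x) *
        (Real.exp (-(x / μ) - y) *
          ((x / μ) ^ (s - 1) * y ^ k / (Real.Gamma s * (Nat.factorial k))))
      = ∫ x in Ioi (0 : ℝ),
        (Real.exp (-y) * y ^ k / (Real.Gamma s * (Nat.factorial k)) *
          ((1 / μ) ^ (s - 1) * (1 / μ))) * (x ^ (s - 1) * Real.exp (-(c * x))) := by
    refine setIntegral_congr_fun measurableSet_Ioi (fun x hx => ?_)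
    have hx0 : 0 < x := hx
    have hdiv : (x / μ) ^ (s - 1) = x ^ (s - 1) * (1 / μ) ^ (s - 1) := by
      rw [div_eq_mul_inv, Real.mul_rpow hx0.le (by positivity), one_div]
    have hexp : Real.exp (-l * x) * Real.exp (-(x / μ) - y)
        = Real.exp (-y) * Real.exp (-(c * x)) := by
      rw [← Real.exp_add, ← Real.exp_add]
      congr 1
      rw [hc_def]
      ring
    calc (1 / μ) * Real.exp (-l * x) *
        (Real.exp (-(x / μ) - y) *
          ((x / μ) ^ (s - 1) * y ^ k / (Real.Gamma s * (Nat.factorial k))))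
        = (Real.exp (-l * x) * Real.exp (-(x / μ) - y)) *
          ((1 / μ) * ((x / μ) ^ (s - 1) * y ^ k / (Real.Gamma s * (Nat.factorial k)))) := by ring
      _ = _ := by rw [hexp, hdiv]; ring
  rw [h1, integral_const_mul, integral_rpow_mul_exp_neg_mul_Ioi hs hc]
  have hrs : (1 / μ) ^ (s - 1) * (1 / μ) = (1 / μ) ^ s := by
    nth_rewrite 2 [show (1 / μ : ℝ) = (1 / μ) ^ (1 : ℝ) by rw [Real.rpow_one]]
    rw [← Real.rpow_add (by positivity), sub_add_cancel]
  rw [hrs]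
  have hmul : (1 / μ : ℝ) ^ s * (1 / c) ^ s = (1 + μ * l) ^ (-s) := by
    rw [← Real.mul_rpow (by positivity) (by positivity),
      show (1 / μ) * (1 / c) = (1 + μ * l)⁻¹ by rw [← hμc]; field_simp,
      Real.inv_rpow hcpos.le, ← Real.rpow_neg hcpos.le]
  have hsplit : (1 + μ * l : ℝ) ^ (-s) = (1 + μ * l) ^ (-α) * ((1 + μ * l)⁻¹) ^ k := by
    have hk : (1 + μ * l : ℝ) ^ (-(k : ℝ)) = ((1 + μ * l)⁻¹) ^ k := by
      rw [Real.rpow_neg hcpos.le, Real.rpow_natCast, inv_pow]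
    rw [hs_def, show (-((k : ℝ) + α)) = -α + (-(k : ℝ)) by ring,
      Real.rpow_add hcpos, hk]
  have hyk : y ^ k * ((1 + μ * l)⁻¹) ^ k = (y / (1 + μ * l)) ^ k := by
    rw [← mul_pow, div_eq_mul_inv]
  have key : (1 / μ : ℝ) ^ s * (1 / c) ^ s = (1 + μ * l) ^ (-α) * ((1 + μ * l)⁻¹) ^ k :=
    hmul.trans hsplit
  calc Real.exp (-y) * y ^ k / (Real.Gamma s * (Nat.factorial k)) * ((1 / μ) ^ s)
        * ((1 / c) ^ s * Real.Gamma s)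
      = ((1 / μ : ℝ) ^ s * (1 / c) ^ s) * (Real.exp (-y) * y ^ k)
        * (Real.Gamma s / (Real.Gamma s * (Nat.factorial k))) := by ring
    _ = ((1 + μ * l) ^ (-α) * ((1 + μ * l)⁻¹) ^ k) * (Real.exp (-y) * y ^ k)
        * ((Nat.factorial k : ℝ))⁻¹ := by
        rw [key, div_mul_cancel_left₀ hΓ.ne']
    _ = (Real.exp (-y) * (1 + μ * l) ^ (-α)) * ((y / (1 + μ * l)) ^ k / (Nat.factorial k)) := by
        rw [← hyk]; ring

/-- Laplace transform of the kernel `g_α`. -/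
theorem stmt_12 (α l y μ : ℝ) (hα : 0 < α) (hl : 0 ≤ l) (hy : 0 ≤ y) (hμ : 0 < μ) :
    ∫ x in Set.Ioi (0 : ℝ), (1 / μ) * Real.exp (-l * x) * royenG α (x / μ) y =
      (1 + μ * l) ^ (-α) * Real.exp (-(μ * l * y) / (1 + μ * l)) := by
  classical
  set c : ℝ := 1 + μ * l with hc_def
  have hc : 0 < c := by positivity
  set F : ℕ → ℝ → ℝ := fun k x => (1 / μ) * Real.exp (-l * x) *
      (Real.exp (-(x / μ) - y) *
        ((x / μ) ^ ((k : ℝ) + α - 1) * y ^ k /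
          (Real.Gamma ((k : ℝ) + α) * (Nat.factorial k)))) with hF_def
  have hpt : ∀ x : ℝ, (1 / μ) * Real.exp (-l * x) * royenG α (x / μ) y = ∑' k, F k x := by
    intro x
    rw [royenG, ← tsum_mul_left, ← tsum_mul_left]
  have hterm : ∀ k : ℕ, ∫ x in Set.Ioi (0 : ℝ), F k x
      = (Real.exp (-y) * c ^ (-α)) * ((y / c) ^ k / (Nat.factorial k)) := fun k =>
    royen_term_integral α l y μ hα hl hy hμ k
  have hF_nonneg : ∀ k : ℕ, ∀ x ∈ Set.Ioi (0 : ℝ), 0 ≤ F k x := by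
    intro k x hx
    have hx0 : (0 : ℝ) < x := hx
    have : (0 : ℝ) ≤ (x / μ) ^ ((k : ℝ) + α - 1) := Real.rpow_nonneg (by positivity) _
    rw [hF_def]
    have hΓ : (0 : ℝ) < Real.Gamma ((k : ℝ) + α) := Real.Gamma_pos_of_pos (by positivity)
    positivity
  have hF_int : ∀ k : ℕ, Integrable (F k) (volume.restrict (Set.Ioi (0 : ℝ))) := by
    intro k
    set s : ℝ := (k : ℝ) + α with hs_def
    have hs : 0 < s := by positivity
    have hb : (0 : ℝ) < l + 1 / μ := by positivity
    have base := (royen_integrable_aux hs hb).const_mul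
      (Real.exp (-y) * y ^ k / (Real.Gamma s * (Nat.factorial k)) * ((1 / μ) ^ (s - 1) * (1 / μ)))
    refine (IntegrableOn.congr_fun base ?_ measurableSet_Ioi : IntegrableOn (F k) _ _)
    intro x hx
    have hx0 : (0 : ℝ) < x := hx
    have hdiv : (x / μ) ^ (s - 1) = x ^ (s - 1) * (1 / μ) ^ (s - 1) := by
      rw [div_eq_mul_inv, Real.mul_rpow hx0.le (by positivity), one_div]
    have hexp : Real.exp (-l * x) * Real.exp (-(x / μ) - y)
        = Real.exp (-y) * Real.exp (-((l + 1 / μ) * x)) := by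
      rw [← Real.exp_add, ← Real.exp_add]
      congr 1
      field_simp
      ring
    rw [hF_def]
    simp only
    calc (Real.exp (-y) * y ^ k / (Real.Gamma s * (Nat.factorial k)) *
          ((1 / μ) ^ (s - 1) * (1 / μ))) * (x ^ (s - 1) * Real.exp (-((l + 1 / μ) * x)))
        = (Real.exp (-y) * Real.exp (-((l + 1 / μ) * x))) *
          ((1 / μ) * ((x ^ (s - 1) * (1 / μ) ^ (s - 1)) * y ^ k /
            (Real.Gamma s * (Nat.factorial k)))) := by ring
      _ = _ := by rw [← hexp, ← hdiv]; ring
  have hnorm : ∀ k : ℕ, ∫ x in Set.Ioi (0 : ℝ), ‖F k x‖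
      = (Real.exp (-y) * c ^ (-α)) * ((y / c) ^ k / (Nat.factorial k)) := by
    intro k
    rw [← hterm k]
    refine setIntegral_congr_fun measurableSet_Ioi (fun x hx => ?_)
    exact Real.norm_of_nonneg (hF_nonneg k x hx)
  have hsum : Summable fun k : ℕ => ∫ x in Set.Ioi (0 : ℝ), ‖F k x‖ := by
    simp_rw [hnorm]
    exact (Real.summable_pow_div_factorial (y / c)).mul_left _
  have hswap := integral_tsum_of_summable_integral_norm hF_int hsum
  calc ∫ x in Set.Ioi (0 : ℝ), (1 / μ) * Real.exp (-l * x) * royenG α (x / μ) y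
      = ∫ x in Set.Ioi (0 : ℝ), ∑' k, F k x := by
        refine setIntegral_congr_fun measurableSet_Ioi (fun x _ => hpt x)
    _ = ∑' k, ∫ x in Set.Ioi (0 : ℝ), F k x := hswap.symm
    _ = ∑' k : ℕ, (Real.exp (-y) * c ^ (-α)) * ((y / c) ^ k / (Nat.factorial k)) := by
        exact tsum_congr hterm
    _ = (Real.exp (-y) * c ^ (-α)) * Real.exp (y / c) := by
        rw [tsum_mul_left, Real.exp_eq_exp_ℝ, NormedSpace.exp_eq_tsum_div]
    _ = c ^ (-α) * Real.exp (-(μ * l * y) / c) := by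
        rw [mul_comm (Real.exp (-y)), mul_assoc, ← Real.exp_add]
        congr 1
        rw [show -y + y / c = -(μ * l * y) / c by rw [eq_div_iff hc.ne', add_mul, div_mul_cancel₀ _ hc.ne', hc_def]; ring]
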